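/- Let V be a finite-dimensional complex vector space and Λ_1, …, Λ_k ∈ End(V) pairwise commuting with Λ_2, …, Λ_k semisimple. For g(z) = Σ_{i=0}^{k-1} g_i z^i ∈ G_k(V), g stabilizes Λ(z) = Σ Λ_i z^{-i} under the coadjoint action (i.e., Σ_{i=0}^{k-l}(Λ_{l+i} g_i − g_i Λ_{l+i}) = 0 for l = 1,…,k) if and only if g_{i-1} ∈ Ker(ad_{Λ_i}) ∩ ⋯ ∩ Ker(ad_{Λ_k}) for each i = 1, …, k. In particular dim Z(Λ) = Σ_{i=1}^{k} dim(Ker ad_{Λ_i} ∩ ⋯ ∩ Ker ad_{Λ_k}). -/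

import Mathlib

open Module

/-- The linear map on `(g_0,…,g_{k-1})` whose vanishing is the stabilizer (coadjoint)
relation `Σ_{i=0}^{k-l} ad(Λ_{l+i})(g_i) = 0`, `l = 1,…,k`; its `l`-th component
(0-indexed) is `Σ_{i : l+1+i ≤ k} (Λ_{l+1+i} g_i − g_i Λ_{l+1+i})`. -/
noncomputable def coadStab (V : Type*) [AddCommGroup V] [Module ℂ V]
    (k : ℕ) (Λ : ℕ → Module.End ℂ V) :
    (Fin k → Module.End ℂ V) →ₗ[ℂ] (Fin k → Module.End ℂ V) :=
  LinearMap.pi fun l => ∑ i : Fin k,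
    if (l : ℕ) + 1 + (i : ℕ) ≤ k then
      (LinearMap.mulLeft ℂ (Λ ((l : ℕ) + 1 + (i : ℕ)))
        - LinearMap.mulRight ℂ (Λ ((l : ℕ) + 1 + (i : ℕ)))) ∘ₗ LinearMap.proj i
    else 0

section Aux

variable {V : Type*} [AddCommGroup V] [Module ℂ V]

/-- The adjoint action `ad_A = [A, ·]` as a linear endomorphism of `End ℂ V`. -/
noncomputable def adm (A : Module.End ℂ V) : Module.End ℂ V →ₗ[ℂ] Module.End ℂ V :=
  LinearMap.mulLeft ℂ A - LinearMap.mulRight ℂ A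

lemma adm_apply (A x : Module.End ℂ V) : adm A x = A * x - x * A := rfl

lemma adm_comm {A B : Module.End ℂ V} (h : Commute A B) (x : Module.End ℂ V) :
    adm A (adm B x) = adm B (adm A x) := by
  simp only [adm_apply, mul_sub, sub_mul, mul_assoc]
  rw [← mul_assoc A B x, ← mul_assoc B A x, h.eq]
  abel

variable [FiniteDimensional ℂ V]

lemma key_ad (Λ : Module.End ℂ V) (hΛ : Λ.IsSemisimple) (g : Module.End ℂ V)
    (hN : Λ * (Λ * g - g * Λ) = (Λ * g - g * Λ) * Λ) :
    Λ * g - g * Λ = 0 := by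
  set N := Λ * g - g * Λ with hNdef
  have htop : ⨆ μ : ℂ, Λ.eigenspace μ = ⊤ := by
    have h1 := Module.End.iSup_maxGenEigenspace_eq_top Λ
    simpa only [hΛ.isFinitelySemisimple.maxGenEigenspace_eq_eigenspace] using h1
  have hker : ∀ μ : ℂ, Λ.eigenspace μ ≤ LinearMap.ker N := by
    intro μ v hv
    rw [Module.End.mem_eigenspace_iff] at hv
    have h2 : N v = (Λ - μ • 1) (g v) := by
      simp [hNdef, Module.End.mul_apply, hv, map_smul, LinearMap.sub_apply,
        LinearMap.smul_apply, Module.End.one_apply]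
    have h3 : (Λ - μ • 1) (N v) = 0 := by
      have : Λ (N v) = N (Λ v) := by
        have := congrArg (fun f => f v) hN
        simpa [Module.End.mul_apply] using this
      simp [LinearMap.sub_apply, this, hv, map_smul, sub_self]
    have h4 : (((Λ - μ • 1 : Module.End ℂ V)) ^ 2) (g v) = 0 := by
      rw [sq, Module.End.mul_apply, ← h2, h3]
    have h5 : g v ∈ Λ.genEigenspace μ (2 : ℕ) := by
      rw [Module.End.mem_genEigenspace_nat]; exact h4
    have h6 : g v ∈ Λ.eigenspace μ := by
      rwa [hΛ.isFinitelySemisimple.genEigenspace_eq_eigenspace μ (by norm_num)] at h5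
    rw [LinearMap.mem_ker, h2]
    rw [Module.End.eigenspace_def, LinearMap.mem_ker] at h6
    exact h6
  have : LinearMap.ker N = ⊤ := top_unique (htop ▸ iSup_le hker)
  exact LinearMap.ker_eq_top.mp this

lemma key_ad' (Λ : Module.End ℂ V) (hΛ : Λ.IsSemisimple) (g : Module.End ℂ V)
    (h : adm Λ (adm Λ g) = 0) : adm Λ g = 0 := by
  simp only [adm_apply] at h ⊢
  exact key_ad Λ hΛ g (by rw [sub_eq_zero] at h; exact h)

lemma core (k : ℕ) (Λ : ℕ → Module.End ℂ V)
    (hc : ∀ i j, 1 ≤ i → i ≤ k → 1 ≤ j → j ≤ k → Commute (Λ i) (Λ j))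
    (hs : ∀ i, 2 ≤ i → i ≤ k → (Λ i).IsSemisimple)
    (g : Fin k → Module.End ℂ V)
    (hE : ∀ l : ℕ, 1 ≤ l → l ≤ k →
      ∑ i : Fin k, (if l + (i : ℕ) ≤ k then adm (Λ (l + (i : ℕ))) (g i) else 0) = 0) :
    ∀ n (i : Fin k) (j : ℕ), (i : ℕ) + 1 ≤ j → j ≤ k →
      (k - (j - (i : ℕ))) * (k + 1) + (k - j) < n → adm (Λ j) (g i) = 0 := by
  intro n
  induction n with
  | zero => intro i j _ _ h; omega
  | succ n IH =>
    intro i j hij hjk hmeas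
    obtain ⟨l, hl⟩ : ∃ l, l = j - (i : ℕ) := ⟨_, rfl⟩
    have hm2 : (k - l) * (k + 1) + (k - j) < n + 1 := by rw [hl]; exact hmeas
    have hl1 : 1 ≤ l := by omega
    have hlk : l ≤ k := by omega
    have hji : l + (i : ℕ) = j := by omega
    have h0 := hE l hl1 hlk
    rw [← Finset.sum_erase_add _ _ (Finset.mem_univ i)] at h0
    have hterm : (if l + (i : ℕ) ≤ k then adm (Λ (l + (i : ℕ))) (g i) else 0)
        = adm (Λ j) (g i) := by rw [if_pos (by omega), hji]
    rw [hterm] at h0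
    have hrest : adm (Λ j) (g i) =
        - ∑ i' ∈ Finset.univ.erase i,
          (if l + (i' : ℕ) ≤ k then adm (Λ (l + (i' : ℕ))) (g i') else 0) := by
      linear_combination (norm := module) h0
    have hgt : ∀ i' : Fin k, (i : ℕ) < (i' : ℕ) → l + (i' : ℕ) ≤ k →
        adm (Λ (l + (i' : ℕ))) (g i') = 0 := by
      intro i' hi' hik
      apply IH i' (l + (i' : ℕ)) (by omega) hik
      have h1 : l + (i' : ℕ) - (i' : ℕ) = l := by omega
      rw [h1]
      have h2 : k - (l + (i' : ℕ)) < k - j := by omega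
      omega
    have hlt : ∀ i' : Fin k, (i' : ℕ) < (i : ℕ) → adm (Λ j) (g i') = 0 := by
      intro i' hi'
      apply IH i' j (by omega) hjk
      have h1 : k - (j - (i' : ℕ)) < k - l := by omega
      have h2 : (k - (j - (i' : ℕ))) * (k + 1) < (k - l) * (k + 1) :=
        (Nat.mul_lt_mul_right (by omega)).mpr h1
      omega
    by_cases hj2 : 2 ≤ j
    · have hkill : adm (Λ j) (adm (Λ j) (g i)) = 0 := by
        rw [hrest, map_neg, map_sum]
        rw [neg_eq_zero]
        apply Finset.sum_eq_zero
        intro i' hi'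
        have hne : i' ≠ i := Finset.ne_of_mem_erase hi'
        by_cases hik : l + (i' : ℕ) ≤ k
        · rw [if_pos hik]
          rcases lt_or_gt_of_ne (fun h => hne (Fin.ext h) : (i' : ℕ) ≠ (i : ℕ)) with h1 | h1
          · rw [adm_comm (hc j (l + (i' : ℕ)) (by omega) hjk (by omega) hik), hlt i' h1,
              map_zero]
          · rw [hgt i' h1 hik, map_zero]
        · rw [if_neg hik, map_zero]
      exact key_ad' (Λ j) (hs j hj2 hjk) (g i) hkill
    · rw [hrest, neg_eq_zero]
      apply Finset.sum_eq_zero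
      intro i' hi'
      have hne : i' ≠ i := Finset.ne_of_mem_erase hi'
      have h1 : (i : ℕ) < (i' : ℕ) := by
        rcases Nat.lt_or_ge (i : ℕ) (i' : ℕ) with h | h
        · exact h
        · exfalso; exact hne (Fin.ext (by omega))
      by_cases hik : l + (i' : ℕ) ≤ k
      · rw [if_pos hik, hgt i' h1 hik]
      · rw [if_neg hik]

end Aux

/-- The submodule `Submodule.pi Set.univ p` is linearly equivalent to the product. -/
noncomputable def submodulePiEquiv {ι : Type*} {M : ι → Type*}
    [∀ i, AddCommGroup (M i)] [∀ i, Module ℂ (M i)] (p : ∀ i, Submodule ℂ (M i)) :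
    ↥(Submodule.pi Set.univ p) ≃ₗ[ℂ] ((i : ι) → ↥(p i)) where
  toFun x := fun i => ⟨x.1 i, x.2 i (Set.mem_univ i)⟩
  map_add' _ _ := rfl
  map_smul' _ _ := rfl
  invFun f := ⟨fun i => (f i).1, fun i _ => (f i).2⟩
  left_inv _ := rfl
  right_inv _ := rfl

lemma finrank_submodule_pi {ι : Type*} [Fintype ι] {M : ι → Type*}
    [∀ i, AddCommGroup (M i)] [∀ i, Module ℂ (M i)] [∀ i, FiniteDimensional ℂ (M i)]
    (p : ∀ i, Submodule ℂ (M i)) :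
    finrank ℂ ↥(Submodule.pi Set.univ p) = ∑ i, finrank ℂ ↥(p i) := by
  rw [LinearEquiv.finrank_eq (submodulePiEquiv p), Module.finrank_pi_fintype]

/-- for a normal form `Λ(z) = Σ_{i=1}^k Λ_i z^{-i}` (coefficients pairwise
commuting, `Λ_2,…,Λ_k` semisimple), an element `g ∈ G_k(V)` stabilizes `Λ` under the
coadjoint action iff `g_{i-1}` commutes with `Λ_i, …, Λ_k` for each `i = 1,…,k`.
In particular `dim Z(Λ) = Σ_{i=1}^k dim (Ker ad_{Λ_i} ∩ ⋯ ∩ Ker ad_{Λ_k})`. -/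
theorem stmt15
    (V : Type*) [AddCommGroup V] [Module ℂ V] [FiniteDimensional ℂ V]
    (k : ℕ) (hk : 0 < k) (Λ : ℕ → Module.End ℂ V)
    (hc : ∀ i j, 1 ≤ i → i ≤ k → 1 ≤ j → j ≤ k → Commute (Λ i) (Λ j))
    (hs : ∀ i, 2 ≤ i → i ≤ k → (Λ i).IsSemisimple) :
    (∀ g : Fin k → Module.End ℂ V, IsUnit (g ⟨0, hk⟩) →
      (coadStab V k Λ g = 0 ↔
        ∀ i : Fin k, ∀ j, (i : ℕ) + 1 ≤ j → j ≤ k → Commute (g i) (Λ j))) ∧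
    finrank ℂ ↥(LinearMap.ker (coadStab V k Λ)) =
      ∑ i ∈ Finset.Icc 1 k, finrank ℂ
        ↥(⨅ j : {j : ℕ // i ≤ j ∧ j ≤ k},
          LinearMap.ker (LinearMap.mulLeft ℂ (Λ (j : ℕ))
            - LinearMap.mulRight ℂ (Λ (j : ℕ)))) := by
  -- the main characterisation, valid for all `g` (invertibility is not needed)
  have main : ∀ g : Fin k → Module.End ℂ V,
      (coadStab V k Λ g = 0 ↔
        ∀ i : Fin k, ∀ j, (i : ℕ) + 1 ≤ j → j ≤ k → Commute (g i) (Λ j)) := by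
    intro g
    constructor
    · intro h i j hij hjk
      have hE : ∀ l : ℕ, 1 ≤ l → l ≤ k →
          ∑ i' : Fin k, (if l + (i' : ℕ) ≤ k then adm (Λ (l + (i' : ℕ))) (g i') else 0)
            = 0 := by
        intro l hl1 hlk
        have hfin : l - 1 < k := by omega
        have h1 : coadStab V k Λ g ⟨l - 1, hfin⟩ = 0 := by rw [h]; rfl
        simp only [coadStab, LinearMap.pi_apply, LinearMap.sum_apply,
          apply_ite (fun (f : (Fin k → Module.End ℂ V) →ₗ[ℂ] Module.End ℂ V) => f g),
          LinearMap.comp_apply, LinearMap.proj_apply, LinearMap.zero_apply] at h1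
        have hll : l - 1 + 1 = l := by omega
        simp only [Fin.val_mk, hll] at h1
        simpa only [adm] using h1
      have h2 := core k Λ hc hs g hE ((k - (j - (i : ℕ))) * (k + 1) + (k - j) + 1)
        i j hij hjk (Nat.lt_succ_self _)
      rw [adm_apply, sub_eq_zero] at h2
      exact h2.symm
    · intro h
      funext l
      simp only [coadStab, LinearMap.pi_apply, LinearMap.sum_apply,
        apply_ite (fun (f : (Fin k → Module.End ℂ V) →ₗ[ℂ] Module.End ℂ V) => f g),
        LinearMap.comp_apply, LinearMap.proj_apply, LinearMap.zero_apply, Pi.zero_apply]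
      apply Finset.sum_eq_zero
      intro i _
      by_cases hcond : (l : ℕ) + 1 + (i : ℕ) ≤ k
      · rw [if_pos hcond]
        have := (h i ((l : ℕ) + 1 + (i : ℕ)) (by omega) hcond).eq
        simp only [LinearMap.sub_apply, LinearMap.mulLeft_apply, LinearMap.mulRight_apply]
        rw [sub_eq_zero, ← this]
      · rw [if_neg hcond]
  refine ⟨fun g _ => main g, ?_⟩
  have hker : LinearMap.ker (coadStab V k Λ) =
      Submodule.pi Set.univ (fun i : Fin k =>
        ⨅ j : {j : ℕ // (i : ℕ) + 1 ≤ j ∧ j ≤ k},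
          LinearMap.ker (LinearMap.mulLeft ℂ (Λ (j : ℕ))
            - LinearMap.mulRight ℂ (Λ (j : ℕ)))) := by
    ext g
    rw [LinearMap.mem_ker, main g, Submodule.mem_pi]
    constructor
    · intro h i _
      rw [Submodule.mem_iInf]
      rintro ⟨j, hj1, hj2⟩
      rw [LinearMap.mem_ker]
      have hco := (h i j hj1 hj2).eq
      simp only [LinearMap.sub_apply, LinearMap.mulLeft_apply, LinearMap.mulRight_apply]
      rw [sub_eq_zero, ← hco]
    · intro h i j hj1 hj2
      have h2 := h i (Set.mem_univ i)
      rw [Submodule.mem_iInf] at h2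
      have h3 := h2 ⟨j, hj1, hj2⟩
      rw [LinearMap.mem_ker] at h3
      simp only [LinearMap.sub_apply, LinearMap.mulLeft_apply,
        LinearMap.mulRight_apply] at h3
      exact (sub_eq_zero.mp h3).symm
  rw [hker, finrank_submodule_pi]
  refine Finset.sum_bij' (fun (a : Fin k) _ => (a : ℕ) + 1)
    (fun n hn => ⟨n - 1, by
      simp only [Finset.mem_Icc] at hn; omega⟩) ?_ ?_ ?_ ?_ ?_
  · intro a _
    simp only [Finset.mem_Icc]
    omega
  · intro n hn
    exact Finset.mem_univ _
  · intro a _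
    apply Fin.ext
    simp
  · intro n hn
    simp only [Finset.mem_Icc] at hn
    simp
    omega
  · intro a _
    rfl
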